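/- Every finite simple graph G on n ≥ 2 vertices satisfies lbox(G) ≤ 24 · n / log₂ n. -/

import Mathlib

open Classical

/-- A finite simple graph is an interval graph if each vertex can be assigned a
closed real interval so that distinct vertices are adjacent iff their intervals
intersect. -/
def IsIntervalGraph {V : Type} (I : SimpleGraph V) : Prop :=
  ∃ l r : V → ℝ, ∀ u v : V, u ≠ v →
    (I.Adj u v ↔ (Set.Icc (l u) (r u) ∩ Set.Icc (l v) (r v)).Nonempty)

/-- A vertex is universal if it is adjacent to every other vertex. -/
def IsUniversal {V : Type} (I : SimpleGraph V) (v : V) : Prop :=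
  ∀ u : V, u ≠ v → I.Adj v u

/-- `G` has a local box representation where every vertex is non-universal in at
most `t` of the interval graphs. -/
def LocalBoxRep {V : Type} (G : SimpleGraph V) (t : ℕ) : Prop :=
  ∃ (k : ℕ) (I : Fin k → SimpleGraph V),
    (∀ i, IsIntervalGraph (I i)) ∧
    (∀ u v : V, u ≠ v → (G.Adj u v ↔ ∀ i, (I i).Adj u v)) ∧
    (∀ v : V, {i : Fin k | ¬ IsUniversal (I i) v}.ncard ≤ t)

/-- Local boxicity of a graph. -/
noncomputable def lbox {V : Type} (G : SimpleGraph V) : ℕ :=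
  sInf {t : ℕ | LocalBoxRep G t}

/-- Iterated base-2 logarithm: the number of times `logb 2` must be applied
before the result becomes at most 1. -/
noncomputable def logStar (x : ℝ) : ℕ :=
  sInf {n : ℕ | (Real.logb 2)^[n] x ≤ 1}

/-- A graph is claw-free if it has no induced `K_{1,3}`. -/
def ClawFree {V : Type} (G : SimpleGraph V) : Prop :=
  ∀ v a b c : V, a ≠ b → a ≠ c → b ≠ c →
    ¬ (G.Adj v a ∧ G.Adj v b ∧ G.Adj v c ∧ ¬ G.Adj a b ∧ ¬ G.Adj a c ∧ ¬ G.Adj b c)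

/-- Comparability graph of a poset. -/
def compGraph (α : Type) [PartialOrder α] : SimpleGraph α where
  Adj x y := x ≠ y ∧ (x ≤ y ∨ y ≤ x)
  symm := by
    refine ⟨fun x y h => ?_⟩
    exact ⟨h.1.symm, h.2.symm⟩
  loopless := by
    refine ⟨fun x h => ?_⟩
    exact h.1 rfl

/-- A partial linear extension of a poset, given as a duplicate-free list
(ordered by position) which extends the partial order on its elements. -/
def IsPLE {α : Type} [PartialOrder α] [DecidableEq α] (L : List α) : Prop :=
  L.Nodup ∧ ∀ x ∈ L, ∀ y ∈ L, x ≤ y → L.idxOf x ≤ L.idxOf y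

/-- `x` appears below `y` in the list `L`. -/
def Below {α : Type} [DecidableEq α] (L : List α) (x y : α) : Prop :=
  x ∈ L ∧ y ∈ L ∧ L.idxOf x < L.idxOf y

/-- A local realizer of a poset: a family of ple's such that every strict
relation is witnessed, and every incomparable pair is reversed twice. -/
def IsLocalRealizer {α : Type} [PartialOrder α] [DecidableEq α] {k : ℕ}
    (L : Fin k → List α) : Prop :=
  (∀ i, IsPLE (L i)) ∧
  (∀ x y : α, x < y → ∃ i, Below (L i) x y) ∧
  (∀ x y : α, ¬ x ≤ y → ¬ y ≤ x →
    (∃ i, Below (L i) x y) ∧ (∃ i, Below (L i) y x))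

/-- Local dimension of a poset: the least `t` such that some local realizer has
every element in at most `t` ple's. -/
noncomputable def ldim (α : Type) [PartialOrder α] [DecidableEq α] : ℕ :=
  sInf {t : ℕ | ∃ (k : ℕ) (L : Fin k → List α), IsLocalRealizer L ∧
    ∀ x : α, {i : Fin k | x ∈ L i}.ncard ≤ t}

/-- Product dimension of a graph. -/
noncomputable def prodDim {V : Type} (G : SimpleGraph V) : ℕ :=
  sInf {k : ℕ | 0 < k ∧ ∃ f : V → Fin k → ℕ,
    ∀ u v : V, u ≠ v → (G.Adj u v ↔ ∀ i, f u i ≠ f v i)}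

/-- A poset has height at most 2: every chain has at most 2 elements. -/
def HeightAtMostTwo (α : Type) [Preorder α] : Prop :=
  ∀ x y z : α, x ≤ y → y ≤ z → x = y ∨ y = z

namespace Stmt9Aux
variable {V : Type}

noncomputable def ivG (l r : V → ℝ) : SimpleGraph V where
  Adj u v := u ≠ v ∧ max (l u) (l v) ≤ min (r u) (r v)
  symm := by
    refine ⟨?_⟩
    rintro u v ⟨h1, h2⟩
    exact ⟨h1.symm, by rwa [max_comm (l v), min_comm (r v)]⟩
  loopless := ⟨fun u h => h.1 rfl⟩

lemma ivG_adj (l r : V → ℝ) (u v : V) :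
    (ivG l r).Adj u v ↔ u ≠ v ∧ max (l u) (l v) ≤ min (r u) (r v) := Iff.rfl

section Construction
variable (G : SimpleGraph V) {n : ℕ} (e : V → Fin n) (s : ℕ)

def grp (v : V) : ℕ := (e v : ℕ) / s

def Tp (w u : V) : Prop := grp e s u = grp e s w ∧ ¬ G.Adj w u ∧ u ≠ w

noncomputable def lS (w u : V) : ℝ := if u = w then 0 else if Tp G e s w u then 1 else 0
noncomputable def rS (w u : V) : ℝ := if u = w then 0 else 2

noncomputable def starG (w : V) : SimpleGraph V := ivG (lS G e s w) (rS w)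

lemma Tp_ne {w u : V} (h : Tp G e s w u) : u ≠ w := h.2.2

lemma starG_adj_iff (w u v : V) (huv : u ≠ v) :
    (starG G e s w).Adj u v ↔ ¬ ((u = w ∧ Tp G e s w v) ∨ (v = w ∧ Tp G e s w u)) := by
  rw [starG, ivG_adj]
  constructor
  · rintro ⟨-, h⟩ hc
    rcases hc with ⟨rfl, htv⟩ | ⟨rfl, htu⟩
    · simp only [lS, rS, if_pos rfl, if_neg (Tp_ne G e s htv), if_pos htv] at h
      norm_num at h
    · simp only [lS, rS, if_pos rfl, if_neg (Tp_ne G e s htu), if_pos htu] at h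
      norm_num at h
  · intro hc
    push_neg at hc
    refine ⟨huv, ?_⟩
    by_cases hu : u = w
    · have hv : ¬ v = w := fun h => huv (h ▸ hu)
      have htv : ¬ Tp G e s w v := hc.1 hu
      simp only [lS, rS, if_pos hu, if_neg hv, if_neg htv]
      norm_num
    · by_cases hv : v = w
      · have htu : ¬ Tp G e s w u := hc.2 hv
        simp only [lS, rS, if_pos hv, if_neg hu, if_neg htu]
        norm_num
      · simp only [lS, rS, if_neg hu, if_neg hv]
        by_cases htu : Tp G e s w u <;> by_cases htv : Tp G e s w v <;>
          simp [htu, htv] <;> norm_num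

noncomputable def cA (A : Finset V) : ℕ := sSup (grp e s '' ↑A)

def UA (A : Finset V) : Set V :=
  {u | grp e s u ≠ cA e s A ∧ {w | grp e s w = cA e s A ∧ ¬ G.Adj u w} = ↑A}

noncomputable def lJ (A : Finset V) (u : V) : ℝ := if u ∈ A then 1 else 0
noncomputable def rJ (A : Finset V) (u : V) : ℝ := if u ∈ UA G e s A then 0 else 1

noncomputable def JG (A : Finset V) : SimpleGraph V := ivG (lJ A) (rJ G e s A)

lemma UA_grp_eq {A : Finset V} {u a : V} (h : u ∈ UA G e s A) (ha : a ∈ A) :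
    grp e s a = cA e s A ∧ ¬ G.Adj u a := by
  have : a ∈ ({w | grp e s w = cA e s A ∧ ¬ G.Adj u w} : Set V) := by
    rw [h.2]; exact_mod_cast ha
  exact this

lemma UA_not_mem {A : Finset V} {u : V} (h : u ∈ UA G e s A) : u ∉ A := by
  intro hm
  exact h.1 (UA_grp_eq G e s h hm).1

lemma JG_adj_iff (A : Finset V) (u v : V) (huv : u ≠ v) :
    (JG G e s A).Adj u v ↔
      ¬ ((u ∈ A ∧ v ∈ UA G e s A) ∨ (v ∈ A ∧ u ∈ UA G e s A)) := by
  rw [JG, ivG_adj]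
  constructor
  · rintro ⟨-, h⟩ hc
    rcases hc with ⟨hA, hU⟩ | ⟨hA, hU⟩
    · simp only [lJ, rJ, if_pos hA, if_pos hU] at h
      have h1 := le_trans (le_max_left _ _) (le_trans h (min_le_right _ _))
      norm_num at h1
    · simp only [lJ, rJ, if_pos hA, if_pos hU] at h
      have h1 := le_trans (le_max_right _ _) (le_trans h (min_le_left _ _))
      norm_num at h1
  · intro hc
    push_neg at hc
    refine ⟨huv, ?_⟩
    by_cases hu : u ∈ A <;> by_cases hv : v ∈ A
    · have h1 : u ∉ UA G e s A := fun h => UA_not_mem G e s h hu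
      have h2 : v ∉ UA G e s A := fun h => UA_not_mem G e s h hv
      simp only [lJ, rJ, if_pos hu, if_pos hv, if_neg h1, if_neg h2]; norm_num
    · have h2 : v ∉ UA G e s A := hc.1 hu
      have h1 : u ∉ UA G e s A := fun h => UA_not_mem G e s h hu
      simp only [lJ, rJ, if_pos hu, if_neg hv, if_neg h1, if_neg h2]; norm_num
    · have h1 : u ∉ UA G e s A := hc.2 hv
      have h2 : v ∉ UA G e s A := fun h => UA_not_mem G e s h hv
      simp only [lJ, rJ, if_neg hu, if_pos hv, if_neg h1, if_neg h2]; norm_num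
    · simp only [lJ, rJ, if_neg hu, if_neg hv]
      by_cases h1 : u ∈ UA G e s A <;> by_cases h2 : v ∈ UA G e s A <;>
        simp [h1, h2] <;> norm_num

variable [Fintype V]

lemma adj_starG {u v : V} (hadj : G.Adj u v) (w : V) : (starG G e s w).Adj u v := by
  rw [starG_adj_iff G e s w u v hadj.ne]
  rintro (⟨rfl, htv⟩ | ⟨rfl, htu⟩)
  · exact htv.2.1 hadj
  · exact htu.2.1 hadj.symm

lemma adj_JG {u v : V} (hadj : G.Adj u v) (A : Finset V) : (JG G e s A).Adj u v := by
  rw [JG_adj_iff G e s A u v hadj.ne]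
  rintro (⟨hA, hU⟩ | ⟨hA, hU⟩)
  · exact (UA_grp_eq G e s hU hA).2 hadj.symm
  · exact (UA_grp_eq G e s hU hA).2 hadj

/-- trace finset of `u` with respect to group `c` -/
noncomputable def TF (u : V) (c : ℕ) : Finset V :=
  Set.Finite.toFinset (Set.toFinite {w | grp e s w = c ∧ ¬ G.Adj u w})

lemma TF_coe (u : V) (c : ℕ) :
    (TF G e s u c : Set V) = {w | grp e s w = c ∧ ¬ G.Adj u w} :=
  Set.Finite.coe_toFinset _

lemma nonadj_same_grp {u v : V} (huv : u ≠ v) (hna : ¬ G.Adj u v)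
    (hg : grp e s u = grp e s v) : ¬ (starG G e s u).Adj u v := by
  rw [starG_adj_iff G e s u u v huv]
  intro h
  exact h (Or.inl ⟨rfl, hg.symm, hna, fun hvu => huv hvu.symm⟩)

lemma cA_TF {u v : V} (hna : ¬ G.Adj u v) :
    cA e s (TF G e s u (grp e s v)) = grp e s v := by
  have himg : grp e s '' (TF G e s u (grp e s v) : Set V) = {grp e s v} := by
    apply Set.eq_singleton_iff_unique_mem.mpr
    constructor
    · exact ⟨v, by rw [TF_coe]; exact ⟨rfl, hna⟩, rfl⟩
    · rintro c ⟨w, hw, rfl⟩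
      rw [TF_coe] at hw
      exact hw.1
  rw [cA, himg, csSup_singleton]

lemma nonadj_diff_grp {u v : V} (hna : ¬ G.Adj u v)
    (hg : grp e s u ≠ grp e s v) : ¬ (JG G e s (TF G e s u (grp e s v))).Adj u v := by
  have huv : u ≠ v := fun h => hg (h ▸ rfl)
  have hcA := cA_TF G e s hna
  have hvA : v ∈ TF G e s u (grp e s v) := by
    rw [← Finset.mem_coe, TF_coe]; exact ⟨rfl, hna⟩
  have huU : u ∈ UA G e s (TF G e s u (grp e s v)) := by
    constructor
    · rw [hcA]; exact hg
    · rw [hcA, TF_coe]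
  rw [JG_adj_iff G e s _ u v huv]
  intro h
  exact h (Or.inr ⟨hvA, huU⟩)

lemma grp_ncard (hs : 0 < s) (he : Function.Injective e) (c : ℕ) :
    {w : V | grp e s w = c}.ncard ≤ s := by
  have := Set.ncard_le_ncard_of_injOn (fun w => (e w : ℕ) % s)
    (s := {w : V | grp e s w = c}) (t := ((Finset.range s : Finset ℕ) : Set ℕ))
    (fun a _ => by simp [Nat.mod_lt _ hs])
    (by
      intro a ha b hb hab
      simp only [Set.mem_setOf_eq, grp] at ha hb
      have hab' : (e a : ℕ) % s = (e b : ℕ) % s := hab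
      have : (e a : ℕ) = (e b : ℕ) := by
        have ha' : s * c + (e a : ℕ) % s = (e a : ℕ) := by rw [← ha]; exact Nat.div_add_mod _ s
        have hb' : s * c + (e b : ℕ) % s = (e b : ℕ) := by rw [← hb]; exact Nat.div_add_mod _ s
        rw [← ha', ← hb', hab']
      exact he (Fin.val_injective this))
    (Set.toFinite _)
  rwa [Set.ncard_coe_finset, Finset.card_range] at this

lemma ivG_interval (l r : V → ℝ) : IsIntervalGraph (ivG l r) := by
  refine ⟨l, r, fun u v h => ?_⟩
  rw [ivG_adj, Set.Icc_inter_Icc, Set.nonempty_Icc]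
  simp [h]

lemma not_univ_iff {I : SimpleGraph V} {x : V} :
    ¬ IsUniversal I x ↔ ∃ u, u ≠ x ∧ ¬ I.Adj x u := by
  unfold IsUniversal; push_neg; rfl

lemma star_nonuniv {x w : V} (h : ¬ IsUniversal (starG G e s w) x) :
    grp e s w = grp e s x := by
  obtain ⟨u, hux, hna⟩ := not_univ_iff.mp h
  have := not_not.mp (fun hc => hna ((starG_adj_iff G e s w x u (Ne.symm hux)).mpr hc))
  rcases this with ⟨rfl, _⟩ | ⟨rfl, htx⟩
  · rfl
  · exact htx.1.symm

lemma JG_nonuniv {x : V} {A : Finset V} (h : ¬ IsUniversal (JG G e s A) x) :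
    (x ∈ A ∧ (UA G e s A).Nonempty) ∨ x ∈ UA G e s A := by
  obtain ⟨u, hux, hna⟩ := not_univ_iff.mp h
  have := not_not.mp (fun hc => hna ((JG_adj_iff G e s A x u (Ne.symm hux)).mpr hc))
  rcases this with ⟨hA, hU⟩ | ⟨hA, hU⟩
  · exact Or.inl ⟨hA, ⟨u, hU⟩⟩
  · exact Or.inr hU

lemma B1_bound (hs : 0 < s) (he : Function.Injective e) (x : V) :
    {A : Finset V | x ∈ A ∧ (UA G e s A).Nonempty}.ncard ≤ 2 ^ s := by
  set sg : Finset V := Set.Finite.toFinset (Set.toFinite {w : V | grp e s w = grp e s x}) with hsg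
  have hsub : {A : Finset V | x ∈ A ∧ (UA G e s A).Nonempty} ⊆ ↑(sg.powerset) := by
    rintro A ⟨hxA, u, hu⟩
    simp only [Finset.mem_coe, Finset.mem_powerset]
    intro a haA
    have h1 := (UA_grp_eq G e s hu haA).1
    have h2 := (UA_grp_eq G e s hu hxA).1
    rw [hsg]
    simp only [Set.Finite.mem_toFinset, Set.mem_setOf_eq]
    rw [h1, ← h2]
  calc {A : Finset V | x ∈ A ∧ (UA G e s A).Nonempty}.ncard
      ≤ (↑(sg.powerset) : Set (Finset V)).ncard := Set.ncard_le_ncard hsub (Set.toFinite _)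
    _ = sg.powerset.card := Set.ncard_coe_finset _
    _ = 2 ^ sg.card := Finset.card_powerset _
    _ ≤ 2 ^ s := by
        apply Nat.pow_le_pow_right (by norm_num)
        have : sg.card = {w : V | grp e s w = grp e s x}.ncard :=
          (Set.ncard_eq_toFinset_card _ _).symm
        rw [this]
        exact grp_ncard e s hs he _

lemma B2_bound (x : V) :
    {A : Finset V | x ∈ UA G e s A}.ncard ≤ (n - 1) / s + 1 := by
  apply le_trans (Set.ncard_le_ncard_of_injOn (fun A => cA e s A)
    (t := ((Finset.range ((n - 1) / s + 1) : Finset ℕ) : Set ℕ)) ?_ ?_ (Set.toFinite _))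
  · rw [Set.ncard_coe_finset, Finset.card_range]
  · intro A hA
    simp only [Finset.mem_coe, Finset.mem_range]
    rcases A.eq_empty_or_nonempty with rfl | ⟨a, ha⟩
    · have : cA e s (∅ : Finset V) = 0 := by
        rw [cA]
        simp only [Finset.coe_empty, Set.image_empty]
        rw [csSup_empty]; rfl
      rw [this]; exact Nat.succ_pos _
    · have h1 := (UA_grp_eq G e s hA ha).1
      have h2 : (e a : ℕ) ≤ n - 1 := Nat.le_pred_of_lt (e a).isLt
      have : cA e s A ≤ (n - 1) / s := by
        rw [← h1, grp]
        exact Nat.div_le_div_right h2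
      omega
  · intro A hA B hB hAB
    have hAB' : cA e s A = cA e s B := hAB
    apply Finset.coe_injective
    rw [← hA.2, ← hB.2, hAB']

lemma main_rep (hs : 0 < s) (he : Function.Injective e) :
    LocalBoxRep G (s + (2 ^ s + ((n - 1) / s + 1))) := by
  classical
  set F : V ⊕ Finset V → SimpleGraph V :=
    Sum.elim (fun w => starG G e s w) (fun A => JG G e s A) with hF
  set eqv : Fin (Fintype.card (V ⊕ Finset V)) ≃ (V ⊕ Finset V) := (Fintype.equivFin _).symm
    with heqv
  refine ⟨Fintype.card (V ⊕ Finset V), fun i => F (eqv i), ?_, ?_, ?_⟩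
  · intro i
    show IsIntervalGraph (F (eqv i))
    rw [hF]
    rcases eqv i with w | A
    · exact ivG_interval _ _
    · exact ivG_interval _ _
  · intro u v huv
    constructor
    · intro hadj i
      show (F (eqv i)).Adj u v
      rw [hF]
      rcases eqv i with w | A
      · exact adj_starG G e s hadj w
      · exact adj_JG G e s hadj A
    · intro hall
      by_contra hna
      by_cases hg : grp e s u = grp e s v
      · have h1 := hall (eqv.symm (Sum.inl u))
        have h2 : (F (Sum.inl u)).Adj u v := by
          rw [← Equiv.apply_symm_apply eqv (Sum.inl u)] ; exact h1
        exact nonadj_same_grp G e s huv hna hg h2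
      · have h1 := hall (eqv.symm (Sum.inr (TF G e s u (grp e s v))))
        have h2 : (F (Sum.inr (TF G e s u (grp e s v)))).Adj u v := by
          rw [← Equiv.apply_symm_apply eqv (Sum.inr (TF G e s u (grp e s v)))] ; exact h1
        exact nonadj_diff_grp G e s hna hg h2
  · intro x
    have key : ∀ S : Set (V ⊕ Finset V), (eqv ⁻¹' S).ncard = S.ncard := by
      intro S
      rw [← Equiv.image_symm_eq_preimage, Set.ncard_image_of_injective _ eqv.symm.injective]
    calc {i | ¬ IsUniversal ((fun i => F (eqv i)) i) x}.ncard
        = (eqv ⁻¹' {j | ¬ IsUniversal (F j) x}).ncard := rfl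
      _ = {j | ¬ IsUniversal (F j) x}.ncard := key _
      _ ≤ s + (2 ^ s + ((n - 1) / s + 1)) := by
          have hsplit : {j | ¬ IsUniversal (F j) x} =
              (Sum.inl '' {w : V | ¬ IsUniversal (F (Sum.inl w)) x}) ∪
              (Sum.inr '' {A : Finset V | ¬ IsUniversal (F (Sum.inr A)) x}) := by
            ext j
            cases j with
            | inl w => simp
            | inr A => simp
          rw [hsplit]
          apply le_trans (Set.ncard_union_le _ _)
          have h1 : ((Sum.inl '' {w : V | ¬ IsUniversal (F (Sum.inl w)) x} : Set (V ⊕ Finset V))).ncard ≤ s := by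
            rw [Set.ncard_image_of_injective _ Sum.inl_injective]
            apply le_trans (Set.ncard_le_ncard (t := {w : V | grp e s w = grp e s x})
              (fun w hw => star_nonuniv G e s hw) (Set.toFinite _))
            exact grp_ncard e s hs he _
          have h2 : ((Sum.inr '' {A : Finset V | ¬ IsUniversal (F (Sum.inr A)) x} : Set (V ⊕ Finset V))).ncard ≤
              2 ^ s + ((n - 1) / s + 1) := by
            rw [Set.ncard_image_of_injective _ Sum.inr_injective]
            apply le_trans (Set.ncard_le_ncard
              (t := {A : Finset V | x ∈ A ∧ (UA G e s A).Nonempty} ∪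
                    {A : Finset V | x ∈ UA G e s A})
              (fun A hA => JG_nonuniv G e s hA) (Set.toFinite _))
            apply le_trans (Set.ncard_union_le _ _)
            exact Nat.add_le_add (B1_bound G e s hs he x) (B2_bound G e s x)
          omega

end Construction
end Stmt9Aux

set_option maxHeartbeats 1000000 in
/-- every graph on n ≥ 2 vertices has lbox(G) ≤ 24·n/log₂ n. -/
theorem stmt9 {V : Type} [Fintype V] (G : SimpleGraph V) (n : ℕ)
    (hn : Fintype.card V = n) (h2 : 2 ≤ n) :
    (lbox G : ℝ) ≤ 24 * (n : ℝ) / Real.logb 2 (n : ℝ) := by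
  classical
  obtain ⟨eV⟩ : Nonempty (V ≃ Fin n) := ⟨Fintype.equivFinOfCardEq hn⟩
  set l := Nat.log 2 n with hldef
  set s := max 1 (l / 2) with hsdef
  have hs : 0 < s := lt_of_lt_of_le one_pos (le_max_left _ _)
  have hrep := Stmt9Aux.main_rep G (fun v => eV v) s hs
    (fun a b h => eV.injective h)
  have hlb : lbox G ≤ s + (2 ^ s + ((n - 1) / s + 1)) := Nat.sInf_le hrep
  -- notation
  set L := Real.logb 2 (n : ℝ) with hLdef
  have hn0 : (0:ℝ) ≤ (n:ℝ) := Nat.cast_nonneg n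
  have hn2 : (2:ℝ) ≤ (n:ℝ) := by exact_mod_cast h2
  have hsqnn : (0:ℝ) ≤ Real.sqrt n := Real.sqrt_nonneg n
  have hsq : Real.sqrt n * Real.sqrt n = (n:ℝ) := Real.mul_self_sqrt hn0
  have hsqrt1 : (1:ℝ) ≤ Real.sqrt n := by
    rw [show (1:ℝ) = Real.sqrt 1 from (Real.sqrt_one).symm]
    exact Real.sqrt_le_sqrt (by linarith)
  -- nat log facts
  have hl1 : 1 ≤ l := Nat.log_pos (by norm_num) h2
  have h2l : (2:ℕ) ^ l ≤ n := Nat.pow_log_le_self 2 (by omega)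
  have h2l' : n < 2 ^ (l + 1) := Nat.lt_pow_succ_log_self (by norm_num) n
  -- logb facts
  have hpowlogb : ∀ k : ℕ, Real.logb 2 ((2:ℝ) ^ k) = k := by
    intro k
    rw [Real.logb_pow, Real.logb_self_eq_one (by norm_num : (1:ℝ) < 2), mul_one]
  have hL1 : (1:ℝ) ≤ L := by
    have := Real.logb_le_logb_of_le (by norm_num : (1:ℝ) < 2) (by norm_num : (0:ℝ) < 2) hn2
    rwa [Real.logb_self_eq_one (by norm_num : (1:ℝ) < 2)] at this
  have hLpos : (0:ℝ) < L := lt_of_lt_of_le one_pos hL1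
  have hnpos : (0:ℝ) < n := by linarith
  have hlL : (l:ℝ) ≤ L := by
    have h1 : ((2:ℝ) ^ l) ≤ (n:ℝ) := by exact_mod_cast h2l
    have := Real.logb_le_logb_of_le (by norm_num : (1:ℝ) < 2) (by positivity) h1
    rwa [hpowlogb] at this
  have hLl : L ≤ (l:ℝ) + 1 := by
    have h1 : (n:ℝ) ≤ ((2:ℝ) ^ (l+1)) := by exact_mod_cast h2l'.le
    have := Real.logb_le_logb_of_le (by norm_num : (1:ℝ) < 2) hnpos h1
    rwa [hpowlogb, Nat.cast_add, Nat.cast_one] at this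
  -- s facts
  have hsl : s ≤ l := by omega
  have hsL : (s:ℝ) ≤ L := le_trans (by exact_mod_cast hsl) hlL
  have hs_half : (2:ℝ) * (s:ℝ) ≥ (l:ℝ) - 1 := by
    have : 2 * s ≥ l - 1 := by omega
    have h' : (l:ℝ) - 1 ≤ ((2 * s : ℕ):ℝ) := by
      have hcast : ((l - 1 : ℕ):ℝ) ≤ ((2 * s : ℕ):ℝ) := by exact_mod_cast this
      have : ((l - 1 : ℕ):ℝ) = (l:ℝ) - 1 := by
        have : 1 ≤ l := hl1
        push_cast [this]
        ring
      linarith [hcast, this.symm.le, this.le]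
    calc (l:ℝ) - 1 ≤ ((2 * s : ℕ):ℝ) := h'
      _ = 2 * (s:ℝ) := by push_cast; ring
  have hs4 : L ≤ 4 * (s:ℝ) := by
    by_cases hc : L ≤ 4
    · have : (1:ℝ) ≤ (s:ℝ) := by exact_mod_cast hs
      linarith
    · push_neg at hc
      linarith
  -- power fact
  have hpow : ((2:ℝ) ^ s) ≤ 2 * Real.sqrt n := by
    have h2s : 2 * s ≤ l + 2 := by omega
    have hnat : 2 ^ (2 * s) ≤ 4 * n := by
      calc (2:ℕ) ^ (2 * s) ≤ 2 ^ (l + 2) := Nat.pow_le_pow_right (by norm_num) h2s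
        _ = 4 * 2 ^ l := by ring
        _ ≤ 4 * n := by omega
    have hr : ((2:ℝ) ^ s) ^ 2 ≤ 4 * n := by
      have : ((2:ℝ) ^ (2 * s)) ≤ 4 * n := by exact_mod_cast hnat
      rwa [show (2:ℝ) ^ (2 * s) = ((2:ℝ) ^ s) ^ 2 by rw [pow_mul']] at this
    have hx : (0:ℝ) ≤ (2:ℝ) ^ s := by positivity
    have := Real.sqrt_le_sqrt hr
    rw [Real.sqrt_sq hx] at this
    calc ((2:ℝ) ^ s) ≤ Real.sqrt (4 * n) := this
      _ = 2 * Real.sqrt n := by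
          rw [show (4:ℝ) * n = 2 ^ 2 * n by ring, Real.sqrt_mul (by positivity),
            Real.sqrt_sq (by norm_num)]
  -- m fact
  have hmsnat : ((n - 1) / s + 1) * s ≤ n + s := by
    have := Nat.div_mul_le_self (n - 1) s
    have h1 : ((n - 1) / s + 1) * s = (n - 1) / s * s + s := by ring
    omega
  have hms : (((n - 1) / s + 1 : ℕ):ℝ) * (s:ℝ) ≤ (n:ℝ) + (s:ℝ) := by exact_mod_cast hmsnat
  have hsn : (s:ℝ) ≤ (n:ℝ) := by
    have : s ≤ n := le_trans hsl (Nat.log_le_self 2 n)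
    exact_mod_cast this
  -- L ≤ 3 sqrt n
  have hlog2 : (0.6931471803 : ℝ) < Real.log 2 := Real.log_two_gt_d9
  have hlogn : Real.log n ≤ 2 * Real.sqrt n := by
    have h1 : Real.log (Real.sqrt n) ≤ Real.sqrt n - 1 :=
      Real.log_le_sub_one_of_pos (by positivity)
    have h2 : Real.log (Real.sqrt n) = Real.log n / 2 := Real.log_sqrt hn0
    linarith
  have hL3 : L ≤ 3 * Real.sqrt n := by
    rw [hLdef, Real.logb, div_le_iff₀ (by linarith : (0:ℝ) < Real.log 2)]
    nlinarith [hsqnn]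
  -- final computation
  have hmain : ((s:ℝ) + ((2:ℝ) ^ s + (((n - 1) / s + 1 : ℕ):ℝ))) * L ≤ 24 * n := by
    have hmR : (0:ℝ) ≤ (((n - 1) / s + 1 : ℕ):ℝ) := Nat.cast_nonneg _
    have ha : (s:ℝ) * L ≤ 9 * n := by
      calc (s:ℝ) * L ≤ L * L := mul_le_mul_of_nonneg_right hsL hLpos.le
        _ ≤ (3 * Real.sqrt n) * (3 * Real.sqrt n) :=
            mul_le_mul hL3 hL3 hLpos.le (by positivity)
        _ = 9 * n := by rw [show (3 * Real.sqrt n) * (3 * Real.sqrt n)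
              = 9 * (Real.sqrt n * Real.sqrt n) by ring, hsq]
    have hb : ((2:ℝ) ^ s) * L ≤ 6 * n := by
      calc ((2:ℝ) ^ s) * L ≤ (2 * Real.sqrt n) * (3 * Real.sqrt n) :=
            mul_le_mul hpow hL3 hLpos.le (by positivity)
        _ = 6 * n := by rw [show (2 * Real.sqrt n) * (3 * Real.sqrt n)
              = 6 * (Real.sqrt n * Real.sqrt n) by ring, hsq]
    have hc : (((n - 1) / s + 1 : ℕ):ℝ) * L ≤ 8 * n := by
      calc (((n - 1) / s + 1 : ℕ):ℝ) * L ≤ (((n - 1) / s + 1 : ℕ):ℝ) * (4 * (s:ℝ)) :=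
            mul_le_mul_of_nonneg_left hs4 hmR
        _ = 4 * ((((n - 1) / s + 1 : ℕ):ℝ) * (s:ℝ)) := by ring
        _ ≤ 4 * ((n:ℝ) + (s:ℝ)) := by linarith
        _ ≤ 8 * n := by linarith
    have hexp : ((s:ℝ) + ((2:ℝ) ^ s + (((n - 1) / s + 1 : ℕ):ℝ))) * L
        = (s:ℝ) * L + (((2:ℝ) ^ s) * L + (((n - 1) / s + 1 : ℕ):ℝ) * L) := by ring
    rw [hexp]
    linarith
  calc (lbox G : ℝ) ≤ ((s + (2 ^ s + ((n - 1) / s + 1)) : ℕ) : ℝ) := by exact_mod_cast hlb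
    _ = (s:ℝ) + ((2:ℝ) ^ s + (((n - 1) / s + 1 : ℕ):ℝ)) := by push_cast; ring
    _ ≤ 24 * (n:ℝ) / L := by
        rw [le_div_iff₀ hLpos]
        exact hmain
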